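/- Let K be a field of characteristic different from 2, let g(x) = x² + px + q ∈ K[x] be a monic irreducible quadratic, let K_g = K[x]/(g(x)) be the corresponding quadratic field extension with 𝐱 the image of x, let α ∈ K, and let E : y² = (x − α)(x² + px + q) be the associated elliptic curve over K. Then a point P = (x₀, y₀) ∈ E(K) lies in 2E(K) if and only if x₀ − 𝐱 is a square in K_g. Moreover, if P ∈ 2E(K), then x₀ − α is a square in K. -/

import Mathlib

open WeierstrassCurve Polynomial
open scoped Classical

private lemma aux_some_eq_some {F : Type*} [Field F] {W : Affine F} {x₁ y₁ x₂ y₂ : F}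
    {h₁ : W.Nonsingular x₁ y₁} {h₂ : W.Nonsingular x₂ y₂} (hx : x₁ = x₂) (hy : y₁ = y₂) :
    Affine.Point.some _ _ h₁ = Affine.Point.some _ _ h₂ := by
  subst hx; subst hy; rfl

private lemma aux_slope {F : Type*} [Field F] {W : Affine F} {X Y : F} (hy : Y ≠ W.negY X Y) :
    W.slope X X Y Y * (Y - W.negY X Y) = 3*X^2 + 2*W.a₂*X + W.a₄ - W.a₁*Y := by
  rw [Affine.slope_of_Y_ne rfl hy, div_mul_cancel₀ _ (sub_ne_zero.mpr hy)]

private lemma quad_no_root {K : Type*} [Field K] {p q : K}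
    (hirr : Irreducible (X^2 + C p * X + C q)) (t : K) : t^2 + p*t + q ≠ 0 := by
  intro h
  have hroot : IsRoot (X^2 + C p * X + C q) t := by simp [IsRoot, h]
  obtain ⟨k, hk⟩ := dvd_iff_isRoot.mpr hroot
  have hdeg : (X^2 + C p * X + C q : K[X]).natDegree = 2 := by compute_degree!
  rcases hirr.isUnit_or_isUnit hk with h1 | h2
  · exact (Polynomial.not_isUnit_X_sub_C t) h1
  · have hk0 : k ≠ 0 := by
      rintro rfl
      rw [mul_zero] at hk
      rw [hk] at hdeg
      simp at hdeg
    have : k.natDegree = 1 := by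
      have h3 := congrArg natDegree hk
      rw [natDegree_mul (X_sub_C_ne_zero t) hk0, natDegree_X_sub_C, hdeg] at h3
      omega
    exact (Polynomial.not_isUnit_of_natDegree_pos k (by omega)) h2

set_option maxHeartbeats 4000000 in
theorem divisible_by_two_iff_square_in_quadratic_ext {K : Type*} [Field K]
    (h2 : (2 : K) ≠ 0) (p q α : K)
    (g : K[X]) (hg : g = X ^ 2 + C p * X + C q) (hirr : Irreducible g)
    (E : WeierstrassCurve K) (hE : E = ⟨0, p - α, 0, q - α * p, -(α * q)⟩)
    (x₀ y₀ : K) (hP : E.toAffine.Nonsingular x₀ y₀) :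
    ((∃ Q : E.toAffine.Point, 2 • Q = Affine.Point.some _ _ hP) ↔
        IsSquare (algebraMap K (AdjoinRoot g) x₀ - AdjoinRoot.root g)) ∧
    ((∃ Q : E.toAffine.Point, 2 • Q = Affine.Point.some _ _ hP) → IsSquare (x₀ - α)) := by
  subst hE
  haveI : Fact (Irreducible g) := ⟨hirr⟩
  set Kg := AdjoinRoot g with hKg
  set φ : K →+* Kg := algebraMap K Kg with hφ
  set θ : Kg := AdjoinRoot.root g with hθdef
  have hinj : Function.Injective φ := φ.injective
  have hnr : ∀ t : K, t^2 + p*t + q ≠ 0 := quad_no_root (hg ▸ hirr)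
  have hθ : θ^2 + φ p * θ + φ q = 0 := by
    have h : (aeval θ) (X ^ 2 + C p * X + C q) = 0 := by
      rw [← hg, AdjoinRoot.aeval_eq, AdjoinRoot.mk_self]
    simpa [hφ, AdjoinRoot.algebraMap_eq, map_add, map_mul, map_pow] using h
  have hφne : ∀ t : K, t ≠ 0 → φ t ≠ 0 := by
    intro t ht h
    exact ht (hinj (by simpa using h))
  have hnotin : ∀ s : K, φ s ≠ θ := by
    intro s hs
    apply hnr s
    apply hinj
    rw [map_add, map_add, map_mul, map_pow, map_zero, hs]
    exact hθ
  have hindep : ∀ a b c d : K, φ a + φ b * θ = φ c + φ d * θ → a = c ∧ b = d := by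
    intro a b c d h
    by_cases hbd : b = d
    · subst hbd
      refine ⟨hinj ?_, rfl⟩
      have := add_right_cancel h
      exact this
    · exfalso
      apply hnotin ((a - c)/(d - b))
      rw [map_div₀, map_sub, map_sub]
      rw [div_eq_iff (by
        apply sub_ne_zero.mpr
        exact fun hh => hbd (hinj hh).symm)]
      linear_combination h
  have hEq₀ : y₀^2 = (x₀ - α) * (x₀^2 + p*x₀ + q) := by
    have h := hP.1
    rw [Affine.equation_iff] at h
    simp only at h
    linear_combination h
  -- FORWARD
  have hfwd : (∃ Q : (⟨0, p - α, 0, q - α * p, -(α * q)⟩ :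
        WeierstrassCurve K).toAffine.Point, 2 • Q = Affine.Point.some _ _ hP) →
      IsSquare (φ x₀ - θ) ∧ IsSquare (x₀ - α) := by
    rintro ⟨Q, hQ⟩
    rw [two_nsmul] at hQ
    cases Q with
    | zero =>
      rw [← Affine.Point.zero_def, add_zero] at hQ
      exact absurd hQ (by simp [Affine.Point.zero_def])
    | some x₁ y₁ h₁ =>
      by_cases hy : y₁ = Affine.negY (⟨0, p - α, 0, q - α * p, -(α * q)⟩ : WeierstrassCurve K).toAffine x₁ y₁
      · rw [Affine.Point.add_self_of_Y_eq hy] at hQ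
        exact absurd hQ (by simp [← Affine.Point.zero_def])
      · rw [Affine.Point.add_self_of_Y_ne hy] at hQ
        rw [Affine.Point.some.injEq] at hQ
        obtain ⟨hx, -⟩ := hQ
        have hy1 : y₁ ≠ 0 := by
          intro h0
          exact hy (by simp [Affine.negY, h0])
        have h2y : 2*y₁ ≠ 0 := mul_ne_zero h2 hy1
        have hyy : y₁ + y₁ ≠ 0 := by rw [← two_mul]; exact h2y
        have hE₁ : y₁^2 = (x₁ - α) * (x₁^2 + p*x₁ + q) := by
          have h := h₁.1
          rw [Affine.equation_iff] at h
          simp only at h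
          linear_combination h
        rw [Affine.slope_of_Y_ne rfl hy] at hx
        simp only [Affine.addX, Affine.negY] at hx
        have key : x₀ * (2*y₁)^2 =
            (3*x₁^2 + 2*(p-α)*x₁ + (q-α*p))^2 - ((p-α) + 2*x₁)*(2*y₁)^2 := by
          field_simp [hyy] at hx
          linear_combination -hx
        constructor
        · refine ⟨(φ x₁^2 - 2*φ x₁*θ + (2*φ α*θ + φ q + φ p * φ α))/(2*φ y₁), ?_⟩
          have h2yφ : (2 : Kg)*φ y₁ ≠ 0 := by
            intro h
            apply hφne _ h2y
            rw [map_mul, map_ofNat]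
            exact h
          have keyφ : φ x₀ * (2*φ y₁)^2 =
              (3*φ x₁^2 + 2*(φ p-φ α)*φ x₁ + (φ q-φ α*φ p))^2
                - ((φ p-φ α) + 2*φ x₁)*(2*φ y₁)^2 := by
            have := congrArg φ key
            simpa only [map_mul, map_add, map_sub, map_pow, map_ofNat] using this
          have hE₁φ : φ y₁^2 = (φ x₁ - φ α) * (φ x₁^2 + φ p*φ x₁ + φ q) := by
            have := congrArg φ hE₁
            simpa only [map_mul, map_add, map_sub, map_pow] using this
          have main : (φ x₀ - θ) * (2*φ y₁)^2 =
              (φ x₁^2 - 2*φ x₁*θ + (2*φ α*θ + φ q + φ p * φ α))^2 := by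
            linear_combination keyφ + (-4*(φ α)^2 + 8*φ x₁*φ α - 4*(φ x₁)^2) * hθ
              + (-4*θ + 4*φ α - 4*φ p - 8*φ x₁) * hE₁φ
          rw [div_mul_div_comm, eq_div_iff (mul_ne_zero h2yφ h2yφ)]
          linear_combination main
        · refine ⟨(x₁^2 - 2*α*x₁ - q - p*α)/(2*y₁), ?_⟩
          have main : (x₀ - α) * (2*y₁)^2 = (x₁^2 - 2*α*x₁ - q - p*α)^2 := by
            linear_combination key + (-4*p - 8*x₁) * hE₁
          field_simp
          linear_combination main
  -- REVERSE
  have hrev : IsSquare (φ x₀ - θ) → (∃ Q : (⟨0, p - α, 0, q - α * p, -(α * q)⟩ :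
        WeierstrassCurve K).toAffine.Point, 2 • Q = Affine.Point.some _ _ hP) := by
    rintro ⟨z, hz⟩
    obtain ⟨P0, hP0⟩ := AdjoinRoot.mk_surjective z
    have hmon : g.Monic := by
      rw [hg, add_assoc]
      apply monic_X_pow_add
      have hd1 : (C p * X + C q : K[X]).degree ≤ 1 := by compute_degree
      exact lt_of_le_of_lt hd1 (by norm_num)
    have hgdeg : g.degree = 2 := by rw [hg]; compute_degree!
    have hzr : z = AdjoinRoot.mk g (P0 %ₘ g) := by
      conv_lhs => rw [← hP0, ← Polynomial.modByMonic_add_div P0 g]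
      rw [map_add, map_mul, AdjoinRoot.mk_self, zero_mul, add_zero]
    have hrdeg : (P0 %ₘ g).degree ≤ 1 := by
      have h := Polynomial.degree_modByMonic_lt P0 hmon
      rw [hgdeg] at h
      exact Order.le_of_lt_succ (by exact_mod_cast h)
    obtain ⟨u, v, hzuv⟩ : ∃ u v : K, z = φ u + φ v * θ := by
      refine ⟨(P0 %ₘ g).coeff 0, (P0 %ₘ g).coeff 1, ?_⟩
      rw [hzr]
      conv_lhs => rw [Polynomial.eq_X_add_C_of_degree_le_one hrdeg]
      rw [map_add, map_mul, AdjoinRoot.mk_X, AdjoinRoot.mk_C, AdjoinRoot.mk_C]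
      rw [hφ, AdjoinRoot.algebraMap_eq]
      ring
    rw [hzuv] at hz
    have hkey : φ x₀ + φ (-1) * θ = φ (u^2 - v^2*q) + φ (2*u*v - v^2*p) * θ := by
      simp only [map_add, map_sub, map_mul, map_pow, map_neg, map_one, map_ofNat]
      linear_combination hz + (φ v)^2 * hθ
    obtain ⟨hx0, hR⟩ := hindep _ _ _ _ hkey
    have hv : v ≠ 0 := by
      rintro rfl
      norm_num at hR
    subst hx0
    have hn2 : (u^2 - u*v*p + v^2*q)^2 = (u^2 - v^2*q)^2 + p*(u^2 - v^2*q) + q := by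
      linear_combination (q + (-2)*q*u*v + p*u^2) * hR
    have hnne : (u^2 - u*v*p + v^2*q) ≠ 0 := by
      intro h0
      exact hnr (u^2 - v^2*q) (by rw [← hn2, h0]; ring)
    have hsne : (2*u - v*p) ≠ 0 := by
      intro h0
      have hvs : v*(2*u - v*p) = -1 := by linear_combination -hR
      rw [h0, mul_zero] at hvs
      norm_num at hvs
    obtain ⟨w, hy0, hw2⟩ : ∃ w : K, y₀ = w * (u^2 - u*v*p + v^2*q) ∧ w^2 = (u^2 - v^2*q) - α := by
      refine ⟨y₀ / (u^2 - u*v*p + v^2*q), (div_mul_cancel₀ _ hnne).symm, ?_⟩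
      rw [div_pow, div_eq_iff (pow_ne_zero 2 hnne)]
      linear_combination hEq₀ - ((u^2 - v^2*q) - α) * hn2
    have hα : α = (u^2 - v^2*q - w^2) := by linear_combination hw2
    subst hα
    subst hy0
    have hXne : w^2 + w*(2*u - v*p) + (u^2 - u*v*p + v^2*q) ≠ 0 := by
      intro h0
      have hfact : (φ w + (φ u + φ v * θ)) * (φ (w + u - v*p) - φ v * θ)
          = φ (w^2 + w*(2*u - v*p) + (u^2 - u*v*p + v^2*q)) := by
        simp only [map_add, map_sub, map_mul, map_pow, map_ofNat]
        linear_combination (-(φ v)^2) * hθ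
      rw [h0, map_zero] at hfact
      rcases mul_eq_zero.mp hfact with h1 | h1
      · apply hnotin (-(w+u)/v)
        rw [map_div₀, map_neg, map_add, div_eq_iff (hφne v hv)]
        linear_combination -h1
      · apply hnotin ((w+u-v*p)/v)
        rw [map_div₀, div_eq_iff (hφne v hv)]
        linear_combination h1
    have hy1ne : ((w^2 + w*(2*u - v*p) + (u^2 - u*v*p + v^2*q))*(2*u - v*p)) ≠ 0 := mul_ne_zero hXne hsne
    have hyy1 : ((w^2 + w*(2*u - v*p) + (u^2 - u*v*p + v^2*q))*(2*u - v*p)) + ((w^2 + w*(2*u - v*p) + (u^2 - u*v*p + v^2*q))*(2*u - v*p)) ≠ 0 := by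
      intro h0
      apply hy1ne
      have h22 : 2 * ((w^2 + w*(2*u - v*p) + (u^2 - u*v*p + v^2*q))*(2*u - v*p)) = 0 := by linear_combination h0
      exact (mul_eq_zero.mp h22).resolve_left h2
    have heq : (⟨0, p - (u^2 - v^2*q - w^2), 0, q - (u^2 - v^2*q - w^2) * p, -((u^2 - v^2*q - w^2) * q)⟩ :
        WeierstrassCurve K).toAffine.Equation ((u^2 - v^2*q) + w*(2*u - v*p) + (u^2 - u*v*p + v^2*q)) ((w^2 + w*(2*u - v*p) + (u^2 - u*v*p + v^2*q))*(2*u - v*p)) := by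
      rw [Affine.equation_iff]
      simp only
      linear_combination (q*w^2 + (2)*q*u*w + (-2)*q*u*v*w^2 + q*u^2 + (-4)*q*u^2*v*w + (-2)*q*u^3*v + q^2*v^2 + (-2)*q^2*u*v^3 + (2)*p*u*w^3 + (6)*p*u^2*w^2 + (6)*p*u^3*w + (2)*p*u^4 + (-1)*p*q*v*w + p*q*v^2*w^2 + (-1)*p*q*u*v + (6)*p*q*u*v^2*w + (5)*p*q*u^2*v^2 + p*q^2*v^4 + (-1)*p^2*v*w^3 + (-5)*p^2*u*v*w^2 + (-7)*p^2*u^2*v*w + (-3)*p^2*u^3*v + (-2)*p^2*q*v^3*w + (-2)*p^2*q*u*v^3 + p^3*v^2*w^2 + (2)*p^3*u*v^2*w + p^3*u^2*v^2) * hR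
    have hns : (⟨0, p - (u^2 - v^2*q - w^2), 0, q - (u^2 - v^2*q - w^2) * p, -((u^2 - v^2*q - w^2) * q)⟩ :
        WeierstrassCurve K).toAffine.Nonsingular ((u^2 - v^2*q) + w*(2*u - v*p) + (u^2 - u*v*p + v^2*q)) ((w^2 + w*(2*u - v*p) + (u^2 - u*v*p + v^2*q))*(2*u - v*p)) := by
      rw [Affine.nonsingular_iff]
      refine ⟨heq, Or.inr ?_⟩
      simp only [Affine.negY]
      intro hcon
      apply hy1ne
      have h22 : 2 * ((w^2 + w*(2*u - v*p) + (u^2 - u*v*p + v^2*q))*(2*u - v*p)) = 0 := by linear_combination hcon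
      exact (mul_eq_zero.mp h22).resolve_left h2
    have hyne : ((w^2 + w*(2*u - v*p) + (u^2 - u*v*p + v^2*q))*(2*u - v*p)) ≠ (⟨0, p - (u^2 - v^2*q - w^2), 0, q - (u^2 - v^2*q - w^2) * p, -((u^2 - v^2*q - w^2) * q)⟩ :
        WeierstrassCurve K).toAffine.negY ((u^2 - v^2*q) + w*(2*u - v*p) + (u^2 - u*v*p + v^2*q)) ((w^2 + w*(2*u - v*p) + (u^2 - u*v*p + v^2*q))*(2*u - v*p)) := by
      simp only [Affine.negY]
      intro hcon
      apply hy1ne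
      have h22 : 2 * ((w^2 + w*(2*u - v*p) + (u^2 - u*v*p + v^2*q))*(2*u - v*p)) = 0 := by linear_combination hcon
      exact (mul_eq_zero.mp h22).resolve_left h2
    have mainX : (u^2 - v^2*q) * (2*((w^2 + w*(2*u - v*p) + (u^2 - u*v*p + v^2*q))*(2*u - v*p)))^2 = (3*((u^2 - v^2*q) + w*(2*u - v*p) + (u^2 - u*v*p + v^2*q))^2 + 2*(p - (u^2 - v^2*q - w^2))*((u^2 - v^2*q) + w*(2*u - v*p) + (u^2 - u*v*p + v^2*q)) + (q - (u^2 - v^2*q - w^2)*p))^2 - ((p - (u^2 - v^2*q - w^2)) + 2*((u^2 - v^2*q) + w*(2*u - v*p) + (u^2 - u*v*p + v^2*q)))*(2*((w^2 + w*(2*u - v*p) + (u^2 - u*v*p + v^2*q))*(2*u - v*p)))^2 := by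
      linear_combination ((8)*q*u*w^3 + (32)*q*u^2*w^2 + (-16)*q*u^2*v*w^3 + (40)*q*u^3*w + (-64)*q*u^3*v*w^2 + (16)*q*u^4 + (-80)*q*u^4*v*w + (-32)*q*u^5*v + q^2 + (-2)*q^2*u*v + (8)*q^2*u*v^2*w + (12)*q^2*u^2*v^2 + (-16)*q^2*u^2*v^3*w + (-24)*q^2*u^3*v^3 + (8)*p*u*w^5 + (48)*p*u^2*w^4 + (128)*p*u^3*w^3 + (176)*p*u^4*w^2 + (120)*p*u^5*w + (32)*p*u^6 + (2)*p*q*w^2 + (-4)*p*q*v*w^3 + (8)*p*q*u*w + (-32)*p*q*u*v*w^2 + (32)*p*q*u*v^2*w^3 + (6)*p*q*u^2 + (-60)*p*q*u^2*v*w + (136)*p*q*u^2*v^2*w^2 + (-32)*p*q*u^3*v + (192)*p*q*u^3*v^2*w + (88)*p*q*u^4*v^2 + (3)*p*q^2*v^2 + (-4)*p*q^2*v^3*w + (-12)*p*q^2*u*v^3 + (24)*p*q^2*u*v^4*w + (28)*p*q^2*u^2*v^4 + p^2*w^4 + (-4)*p^2*v*w^5 + (8)*p^2*u*w^3 + (-46)*p^2*u*v*w^4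 + (22)*p^2*u^2*w^2 + (-168)*p^2*u^2*v*w^3 + (24)*p^2*u^3*w + (-276)*p^2*u^3*v*w^2 + (9)*p^2*u^4 + (-212)*p^2*u^4*v*w + (-62)*p^2*u^5*v + (-4)*p^2*q*v*w + (10)*p^2*q*v^2*w^2 + (-12)*p^2*q*v^3*w^3 + (-4)*p^2*q*u*v + (36)*p^2*q*u*v^2*w + (-84)*p^2*q*u*v^3*w^2 + (26)*p^2*q*u^2*v^2 + (-140)*p^2*q*u^2*v^3*w + (-68)*p^2*q*u^3*v^3 + (4)*p^2*q^2*v^4 + (-8)*p^2*q^2*v^5*w + (-8)*p^2*q^2*u*v^5 + (-4)*p^3*v*w^3 + (11)*p^3*v^2*w^4 + (-20)*p^3*u*v*w^2 + (68)*p^3*u*v^2*w^3 + (-28)*p^3*u^2*v*w + (142)*p^3*u^2*v^2*w^2 + (-12)*p^3*u^3*v + (124)*p^3*u^3*v^2*w + (39)*p^3*u^4*v^2 + (-8)*p^3*q*v^3*w + (16)*p^3*q*v^4*w^2 + (-8)*p^3*q*u*v^3 + (32)*p^3*q*u*v^4*w + (16)*p^3*q*u^2*v^4 + (4)*p^4*v^2*w^2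 + (-8)*p^4*v^3*w^3 + (8)*p^4*u*v^2*w + (-24)*p^4*u*v^3*w^2 + (4)*p^4*u^2*v^2 + (-24)*p^4*u^2*v^3*w + (-8)*p^4*u^3*v^3) * hR
    have mainY : (w * (u^2 - u*v*p + v^2*q)) * (2*((w^2 + w*(2*u - v*p) + (u^2 - u*v*p + v^2*q))*(2*u - v*p))) = -((3*((u^2 - v^2*q) + w*(2*u - v*p) + (u^2 - u*v*p + v^2*q))^2 + 2*(p - (u^2 - v^2*q - w^2))*((u^2 - v^2*q) + w*(2*u - v*p) + (u^2 - u*v*p + v^2*q)) + (q - (u^2 - v^2*q - w^2)*p)) * ((u^2 - v^2*q) - ((u^2 - v^2*q) + w*(2*u - v*p) + (u^2 - u*v*p + v^2*q)))) - 2*((w^2 + w*(2*u - v*p) + (u^2 - u*v*p + v^2*q))*(2*u - v*p))^2 := by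
      linear_combination ((2)*q*u*w + q*u^2 + (-4)*q*u^2*v*w + (-2)*q*u^3*v + q^2*v^2 + (-2)*q^2*u*v^3 + (2)*p*u*w^3 + (9)*p*u^2*w^2 + (10)*p*u^3*w + (3)*p*u^4 + (-1)*p*q*v*w + p*q*v^2*w^2 + (-1)*p*q*u*v + (10)*p*q*u*v^2*w + (7)*p*q*u^2*v^2 + (2)*p*q^2*v^4 + (-1)*p^2*v*w^3 + (-9)*p^2*u*v*w^2 + (-13)*p^2*u^2*v*w + (-5)*p^2*u^3*v + (-4)*p^2*q*v^3*w + (-4)*p^2*q*u*v^3 + (2)*p^3*v^2*w^2 + (4)*p^3*u*v^2*w + (2)*p^3*u^2*v^2) * hR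
    have haddX : (⟨0, p - (u^2 - v^2*q - w^2), 0, q - (u^2 - v^2*q - w^2) * p, -((u^2 - v^2*q - w^2) * q)⟩ :
        WeierstrassCurve K).toAffine.addX ((u^2 - v^2*q) + w*(2*u - v*p) + (u^2 - u*v*p + v^2*q)) ((u^2 - v^2*q) + w*(2*u - v*p) + (u^2 - u*v*p + v^2*q))
          ((⟨0, p - (u^2 - v^2*q - w^2), 0, q - (u^2 - v^2*q - w^2) * p, -((u^2 - v^2*q - w^2) * q)⟩ :
        WeierstrassCurve K).toAffine.slope ((u^2 - v^2*q) + w*(2*u - v*p) + (u^2 - u*v*p + v^2*q)) ((u^2 - v^2*q) + w*(2*u - v*p) + (u^2 - u*v*p + v^2*q)) ((w^2 + w*(2*u - v*p) + (u^2 - u*v*p + v^2*q))*(2*u - v*p)) ((w^2 + w*(2*u - v*p) + (u^2 - u*v*p + v^2*q))*(2*u - v*p))) = (u^2 - v^2*q) := by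
      have hLD := aux_slope hyne
      have hLD2 := congrArg (· ^ 2) hLD
      simp only [Affine.addX, Affine.negY] at hLD2 ⊢
      refine mul_right_cancel₀ (pow_ne_zero 2 (mul_ne_zero h2 hy1ne)) ?_
      linear_combination -mainX + hLD2
    have haddY : (⟨0, p - (u^2 - v^2*q - w^2), 0, q - (u^2 - v^2*q - w^2) * p, -((u^2 - v^2*q - w^2) * q)⟩ :
        WeierstrassCurve K).toAffine.addY ((u^2 - v^2*q) + w*(2*u - v*p) + (u^2 - u*v*p + v^2*q)) ((u^2 - v^2*q) + w*(2*u - v*p) + (u^2 - u*v*p + v^2*q)) ((w^2 + w*(2*u - v*p) + (u^2 - u*v*p + v^2*q))*(2*u - v*p))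
          ((⟨0, p - (u^2 - v^2*q - w^2), 0, q - (u^2 - v^2*q - w^2) * p, -((u^2 - v^2*q - w^2) * q)⟩ :
        WeierstrassCurve K).toAffine.slope ((u^2 - v^2*q) + w*(2*u - v*p) + (u^2 - u*v*p + v^2*q)) ((u^2 - v^2*q) + w*(2*u - v*p) + (u^2 - u*v*p + v^2*q)) ((w^2 + w*(2*u - v*p) + (u^2 - u*v*p + v^2*q))*(2*u - v*p)) ((w^2 + w*(2*u - v*p) + (u^2 - u*v*p + v^2*q))*(2*u - v*p))) = w * (u^2 - u*v*p + v^2*q) := by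
      have hLD := aux_slope hyne
      rw [Affine.addY, Affine.negAddY, haddX]
      simp only [Affine.negY] at hLD ⊢
      refine mul_right_cancel₀ (mul_ne_zero h2 hy1ne) ?_
      linear_combination -mainY + (w*(2*u - v*p) + (u^2 - u*v*p + v^2*q)) * hLD
    refine ⟨Affine.Point.some _ _ hns, ?_⟩
    rw [two_nsmul, Affine.Point.add_self_of_Y_ne hyne]
    exact aux_some_eq_some haddX haddY
  exact ⟨⟨fun h => (hfwd h).1, hrev⟩, fun h => (hfwd h).2⟩
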